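/- There exists a constant C > 0 such that for every complex μ with |μ| ≥ 1 and every x ∈ [0, π/2], the solution ω₁ satisfies the growth bound |ω₁(x, μ)| ≤ C·|μ|·e^{|Im μ|·x}. -/

import Mathlib

open Real Set

section Aux
open Complex Filter

lemma hasDeriv_normSq {f : ℝ → ℂ} {d : ℂ} {s : Set ℝ} {x : ℝ}
    (hf : HasDerivWithinAt f d s x) :
    HasDerivWithinAt (fun y => Complex.normSq (f y)) (2 * (d * (starRingEnd ℂ) (f x)).re) s x := by
  have hre : HasDerivWithinAt (fun y => (f y).re) d.re s x :=
    Complex.reCLM.hasFDerivAt.comp_hasDerivWithinAt x hf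
  have him : HasDerivWithinAt (fun y => (f y).im) d.im s x :=
    Complex.imCLM.hasFDerivAt.comp_hasDerivWithinAt x hf
  have := (hre.mul hre).add (him.mul him)
  convert this using 1
  · rfl
  · rfl
  · funext y; simp [Complex.normSq_apply]
  · simp [Complex.mul_re]; ring

lemma cross_bound (μ v w : ℂ) :
    2 * ((μ * v) * (starRingEnd ℂ) (μ * w)).re + 2 * ((-(μ^2) * w) * (starRingEnd ℂ) v).re
      ≤ 2 * |μ.im| * (Complex.normSq (μ * w) + Complex.normSq v) := by
  have hkey : 2 * ((μ * v) * (starRingEnd ℂ) (μ * w)).re + 2 * ((-(μ^2) * w) * (starRingEnd ℂ) v).re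
      = -4 * μ.im * ((starRingEnd ℂ) μ * v * (starRingEnd ℂ) w).im := by
    simp [Complex.mul_re, Complex.mul_im, pow_two]; ring
  rw [hkey]
  set ζ := (starRingEnd ℂ) μ * v * (starRingEnd ℂ) w with hζ
  have h1 : |ζ.im| ≤ ‖ζ‖ := Complex.abs_im_le_norm ζ
  have h2 : ‖ζ‖ = ‖μ * w‖ * ‖v‖ := by
    simp [hζ, norm_mul]; ring
  have h4 : -4 * μ.im * ζ.im ≤ 4 * |μ.im| * |ζ.im| := by
    have h5 : -4 * μ.im * ζ.im ≤ |(-4) * μ.im * ζ.im| := le_abs_self _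
    have h6 : |(-4) * μ.im * ζ.im| = 4 * |μ.im| * |ζ.im| := by
      rw [abs_mul, abs_mul]; norm_num
    linarith
  calc -4 * μ.im * ζ.im ≤ 4 * |μ.im| * |ζ.im| := h4
    _ ≤ 4 * |μ.im| * (‖μ * w‖ * ‖v‖) := by
        apply mul_le_mul_of_nonneg_left (h1.trans h2.le) (by positivity)
    _ ≤ 2 * |μ.im| * (Complex.normSq (μ * w) + Complex.normSq v) := by
        rw [← Complex.sq_norm, ← Complex.sq_norm]
        nlinarith [sq_nonneg (‖μ * w‖ - ‖v‖), abs_nonneg μ.im,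
          norm_nonneg (μ * w), norm_nonneg v]

lemma delay_bound (μ z v : ℂ) (qx M R : ℝ) (hq : |qx| ≤ M) (hμ : 1 ≤ ‖μ‖)
    (hz : Complex.normSq (μ * z) ≤ R) (hv : Complex.normSq v ≤ R) :
    2 * ((-(qx:ℂ) * z) * (starRingEnd ℂ) v).re ≤ 2 * M * R := by
  have hR : 0 ≤ R := le_trans (Complex.normSq_nonneg _) hv
  have h1 : ((-(qx:ℂ) * z) * (starRingEnd ℂ) v).re ≤ ‖(-(qx:ℂ) * z) * (starRingEnd ℂ) v‖ :=
    Complex.re_le_norm _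
  have h2 : ‖(-(qx:ℂ) * z) * (starRingEnd ℂ) v‖ = |qx| * (‖z‖ * ‖v‖) := by
    simp [norm_mul]; ring
  have hz' : ‖z‖ * ‖v‖ ≤ R := by
    have e1 : ‖z‖ ≤ ‖μ * z‖ := by
      rw [norm_mul]; nlinarith [norm_nonneg z, norm_nonneg (μ*z)]
    have e2 : ‖μ * z‖ ^ 2 ≤ R := by rwa [Complex.sq_norm]
    have e3 : ‖v‖ ^ 2 ≤ R := by rwa [Complex.sq_norm]
    nlinarith [norm_nonneg z, norm_nonneg v, norm_nonneg (μ*z),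
      sq_nonneg (‖μ*z‖ - ‖v‖)]
  have hM : 0 ≤ M := le_trans (abs_nonneg _) hq
  calc 2 * ((-(qx:ℂ) * z) * (starRingEnd ℂ) v).re ≤ 2 * (|qx| * (‖z‖ * ‖v‖)) := by
        rw [← h2] at *; linarith
    _ ≤ 2 * (M * R) := by
        apply mul_le_mul_of_nonneg_left _ (by norm_num)
        exact mul_le_mul hq hz' (by positivity) hM
    _ = 2 * M * R := by ring

lemma qbound (q : ℝ → ℝ) (hq1 : ContinuousOn q (Ico 0 (π/2)))
    (hqlim1 : ∃ L : ℝ, Filter.Tendsto q (nhdsWithin (π/2) (Iio (π/2))) (nhds L)) :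
    ∃ M : ℝ, 0 ≤ M ∧ ∀ x ∈ Ico 0 (π/2), |q x| ≤ M := by
  obtain ⟨L, hL⟩ := hqlim1
  have hev : ∀ᶠ x in nhdsWithin (π/2) (Iio (π/2)), q x ∈ Ioo (L-1) (L+1) :=
    hL (Ioo_mem_nhds (by linarith) (by linarith))
  rw [Filter.eventually_iff, mem_nhdsLT_iff_exists_Ioo_subset] at hev
  obtain ⟨u, hu, hsub⟩ := hev
  have hπ : (0:ℝ) < π/2 := by positivity
  set u' := max u 0 with hu'
  have hu'lt : u' < π/2 := max_lt hu.out hπ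
  have hcomp : IsCompact (Icc (0:ℝ) u') := isCompact_Icc
  have hsubset : Icc (0:ℝ) u' ⊆ Ico 0 (π/2) := fun y hy => ⟨hy.1, lt_of_le_of_lt hy.2 hu'lt⟩
  obtain ⟨C, hC⟩ := hcomp.exists_bound_of_continuousOn (hq1.mono hsubset)
  refine ⟨max (max C (|L|+1)) 0, le_max_right _ _, fun x hx => ?_⟩
  rcases le_or_gt x u' with h | h
  · have := hC x ⟨hx.1, h⟩
    simp only [Real.norm_eq_abs] at this
    exact this.trans ((le_max_left C _).trans (le_max_left _ 0))
  · have hx' : x ∈ Ioo u (π/2) := ⟨lt_of_le_of_lt (le_max_left u 0) h, hx.2⟩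
    have hio := hsub hx'
    have h1 : |q x| ≤ |L| + 1 := by
      rw [abs_le]
      exact ⟨by nlinarith [neg_abs_le L, hio.1], by nlinarith [le_abs_self L, hio.2]⟩
    exact h1.trans ((le_max_right C _).trans (le_max_left _ 0))

end Aux

set_option maxHeartbeats 1000000 in
theorem stmt7
    (a₁ a₁' a₂ a₂' b δ : ℝ) (hδ : δ ≠ 0) (ha₂' : a₂' ≠ 0)
    (q Δ : ℝ → ℝ)
    (hq1 : ContinuousOn q (Ico 0 (π/2))) (hq2 : ContinuousOn q (Ioc (π/2) π))
    (hqlim1 : ∃ L : ℝ, Filter.Tendsto q (nhdsWithin (π/2) (Iio (π/2))) (nhds L))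
    (hqlim2 : ∃ L : ℝ, Filter.Tendsto q (nhdsWithin (π/2) (Ioi (π/2))) (nhds L))
    (hΔ1 : ContinuousOn Δ (Ico 0 (π/2))) (hΔ2 : ContinuousOn Δ (Ioc (π/2) π))
    (hΔlim1 : ∃ L : ℝ, Filter.Tendsto Δ (nhdsWithin (π/2) (Iio (π/2))) (nhds L))
    (hΔlim2 : ∃ L : ℝ, Filter.Tendsto Δ (nhdsWithin (π/2) (Ioi (π/2))) (nhds L))
    (hΔ0 : ∀ x, 0 ≤ Δ x)
    (hret1 : ∀ x ∈ Ico 0 (π/2), 0 ≤ x - Δ x)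
    (hret2 : ∀ x ∈ Ioc (π/2) π, π/2 ≤ x - Δ x)
    (ω₁ ω₁d ω₁dd : ℂ → ℝ → ℂ)
    (hder1 : ∀ (μ : ℂ), ∀ x ∈ Icc 0 (π/2),
      HasDerivWithinAt (ω₁ μ) (ω₁d μ x) (Icc 0 (π/2)) x)
    (hder2 : ∀ (μ : ℂ), ∀ x ∈ Icc 0 (π/2),
      HasDerivWithinAt (ω₁d μ) (ω₁dd μ x) (Icc 0 (π/2)) x)
    (hcont : ∀ (μ : ℂ), ContinuousOn (ω₁dd μ) (Icc 0 (π/2)))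
    (hode : ∀ (μ : ℂ), ∀ x ∈ Icc 0 (π/2),
      ω₁dd μ x + (q x : ℂ) * ω₁ μ (x - Δ x) = -μ^2 * ω₁ μ x)
    (hinit : ∀ (μ : ℂ), ω₁ μ 0 = μ * a₂' + a₂)
    (hinit' : ∀ (μ : ℂ), ω₁d μ 0 = μ * a₁' + a₁) :
    ∃ C > 0, ∀ (μ : ℂ), 1 ≤ ‖μ‖ → ∀ x ∈ Icc 0 (π/2),
      ‖ω₁ μ x‖ ≤ C * ‖μ‖ * Real.exp (|μ.im| * x) := by
  obtain ⟨M, hM0, hM⟩ := qbound q hq1 hqlim1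
  have hπ : (0:ℝ) < π/2 := by positivity
  set c₂ : ℝ := (|a₂'| + |a₂|)^2 + (|a₁'| + |a₁|)^2 with hc₂def
  have hc₂0 : 0 ≤ c₂ := by positivity
  refine ⟨Real.sqrt ((c₂+1)*(2*M+1)) * Real.exp ((M+1/2)*(π/2)), by positivity, ?_⟩
  intro μ hμ
  set E : ℝ → ℝ := fun x => Complex.normSq (μ * ω₁ μ x) + Complex.normSq (ω₁d μ x) with hE
  set L : ℝ := 2*|μ.im| + 2*M + 1 with hLdef
  have hL0 : 0 ≤ L := by rw [hLdef]; positivity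
  set A : ℝ := (E 0 + 1)*(2*M+1) with hA
  set ψ : ℝ → ℝ := fun x => E x * Real.exp (-L * x) with hψ
  set D : ℝ → ℝ := fun x => 2*((μ * ω₁d μ x) * (starRingEnd ℂ) (μ * ω₁ μ x)).re
       + 2*((ω₁dd μ x) * (starRingEnd ℂ) (ω₁d μ x)).re with hD
  set ψd : ℝ → ℝ := fun x => D x * Real.exp (-L * x) + E x * (Real.exp (-L*x) * (-L)) with hψd
  have hEnn : ∀ x, 0 ≤ E x := fun x =>
    add_nonneg (Complex.normSq_nonneg _) (Complex.normSq_nonneg _)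
  have hA0 : 0 ≤ A := by rw [hA]; nlinarith [hEnn 0]
  have hEder : ∀ x ∈ Icc 0 (π/2), HasDerivWithinAt E (D x) (Icc 0 (π/2)) x := by
    intro x hx
    have h1 : HasDerivWithinAt (fun y => μ * ω₁ μ y) (μ * ω₁d μ x) (Icc 0 (π/2)) x :=
      (hder1 μ x hx).const_mul μ
    exact (hasDeriv_normSq h1).add (hasDeriv_normSq (hder2 μ x hx))
  have hψder : ∀ x ∈ Icc 0 (π/2), HasDerivWithinAt ψ (ψd x) (Icc 0 (π/2)) x := by
    intro x hx
    have hexp : HasDerivWithinAt (fun y => Real.exp (-L*y)) (Real.exp (-L*x) * (-L)) (Icc 0 (π/2)) x := by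
      have h := (((hasDerivAt_id x).const_mul (-L)).exp).hasDerivWithinAt
        (s := Icc 0 (π/2))
      simpa using h
    exact (hEder x hx).mul hexp
  have hψcont : ContinuousOn ψ (Icc 0 (π/2)) := fun x hx => (hψder x hx).continuousWithinAt
  have hψ0 : ψ 0 = E 0 := by simp [hψ]
  have hAE0 : ψ 0 ≤ A := by rw [hψ0, hA]; nlinarith [hEnn 0]
  have hmulexp : ∀ y:ℝ, Real.exp (L*y) * Real.exp (-L*y) = 1 := by
    intro y; rw [← Real.exp_add]; ring_nf; exact Real.exp_zero
  have hconv : ∀ x : ℝ, ψ x ≤ A → E x ≤ A * Real.exp (L*x) := by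
    intro x h
    have h2 : ψ x * Real.exp (L*x) ≤ A * Real.exp (L*x) :=
      mul_le_mul_of_nonneg_right h (Real.exp_pos _).le
    calc E x = ψ x * Real.exp (L*x) := by
          simp only [hψ]
          rw [mul_assoc, mul_comm (Real.exp (-L*x)), hmulexp x, mul_one]
      _ ≤ A * Real.exp (L*x) := h2
  have hkey : ∀ c ∈ Icc 0 (π/2), (∀ x ∈ Icc 0 c, ψ x ≤ A) → ∀ x ∈ Icc 0 c, ψ x ≤ A - 1 := by
    intro c hc hAc
    have hbound : ∀ x ∈ Ico 0 c, ψd x ≤ (-(2*M+1)) * ψ x + 2*M*A := by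
      intro x hx
      have hxlt : x < π/2 := lt_of_lt_of_le hx.2 hc.2
      have hxI : x ∈ Icc 0 (π/2) := ⟨hx.1, hxlt.le⟩
      have hxIco : x ∈ Ico 0 (π/2) := ⟨hx.1, hxlt⟩
      have hρmem : x - Δ x ∈ Icc 0 c := by
        refine ⟨hret1 x hxIco, ?_⟩
        have := hΔ0 x; have := hx.2.le; linarith
      have hRx : E x ≤ A * Real.exp (L*x) := hconv x (hAc x ⟨hx.1, hx.2.le⟩)
      have hRρ : E (x - Δ x) ≤ A * Real.exp (L*x) := by
        refine (hconv _ (hAc _ hρmem)).trans ?_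
        apply mul_le_mul_of_nonneg_left _ hA0
        apply Real.exp_le_exp.2
        apply mul_le_mul_of_nonneg_left _ hL0
        have := hΔ0 x; linarith
      have hdd : ω₁dd μ x = -(μ^2) * ω₁ μ x + (-(q x:ℂ)) * ω₁ μ (x - Δ x) := by
        linear_combination hode μ x hxI
      have hsplit : D x = (2*((μ * ω₁d μ x) * (starRingEnd ℂ) (μ * ω₁ μ x)).re
          + 2*((-(μ^2) * ω₁ μ x) * (starRingEnd ℂ) (ω₁d μ x)).re)
          + 2*((-(q x:ℂ) * ω₁ μ (x - Δ x)) * (starRingEnd ℂ) (ω₁d μ x)).re := by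
        simp only [hD]
        rw [hdd, add_mul, Complex.add_re]
        ring
      have h1 := cross_bound μ (ω₁d μ x) (ω₁ μ x)
      have h2 : 2*((-(q x:ℂ) * ω₁ μ (x - Δ x)) * (starRingEnd ℂ) (ω₁d μ x)).re
          ≤ 2 * M * (A * Real.exp (L*x)) := by
        apply delay_bound μ _ _ (q x) M _ (hM x hxIco) hμ
        · exact le_trans (le_add_of_nonneg_right (Complex.normSq_nonneg _)) hRρ
        · exact le_trans (le_add_of_nonneg_left (Complex.normSq_nonneg _)) hRx
      have hDle : D x ≤ 2 * |μ.im| * E x + 2*M*(A * Real.exp (L*x)) := by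
        rw [hsplit]; simp only [hE]; linarith
      have he : (0:ℝ) < Real.exp (-L*x) := Real.exp_pos _
      have hDe : D x * Real.exp (-L*x)
          ≤ (2 * |μ.im| * E x + 2*M*(A * Real.exp (L*x))) * Real.exp (-L*x) :=
        mul_le_mul_of_nonneg_right hDle he.le
      have hprod : (2*M*(A * Real.exp (L*x))) * Real.exp (-L*x) = 2*M*A := by
        rw [show (2*M*(A * Real.exp (L*x))) * Real.exp (-L*x)
          = 2*M*A*(Real.exp (L*x) * Real.exp (-L*x)) from by ring, hmulexp x, mul_one]
      have hcoef : 2*|μ.im| * E x * Real.exp (-L*x) + E x * (Real.exp (-L*x) * (-L))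
          = -(2*M+1) * (E x * Real.exp (-L*x)) := by
        rw [hLdef]; ring
      simp only [hψd, hψ]
      nlinarith [hDe, hprod, hcoef]
    have hG := le_gronwallBound_of_liminf_deriv_right_le (f := ψ) (f' := ψd)
        (δ := E 0) (K := -(2*M+1)) (ε := 2*M*A) (a := 0) (b := c)
        (hψcont.mono (Icc_subset_Icc le_rfl hc.2))
        (fun x hx r hr => by
          have hxlt : x < π/2 := lt_of_lt_of_le hx.2 hc.2
          have hd : HasDerivWithinAt ψ (ψd x) (Ici x) x :=
            (hψder x ⟨hx.1, hxlt.le⟩).mono_of_mem_nhdsWithin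
              (Icc_mem_nhdsGE_of_mem ⟨hx.1, hxlt⟩)
          exact hd.liminf_right_slope_le hr)
        (le_of_eq hψ0) hbound
    intro x hx
    have hGx := hG x hx
    have hKne : (-(2*M+1)) ≠ 0 := by intro h; nlinarith
    rw [gronwallBound_of_K_ne_0 hKne] at hGx
    simp only [sub_zero] at hGx
    have hexple : Real.exp ((-(2*M+1))*x) ≤ 1 := by
      rw [Real.exp_le_one_iff]
      nlinarith [hx.1]
    have hexppos : (0:ℝ) < Real.exp ((-(2*M+1))*x) := Real.exp_pos _
    have hdiv : (2*M*A) / (-(2*M+1)) = -(2*M*(E 0 + 1)) := by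
      rw [div_eq_iff hKne, hA]; ring
    rw [hdiv] at hGx
    have hE0 := hEnn 0
    have hAval : A - 1 = E 0 + 2*M*(E 0 + 1) := by rw [hA]; ring
    rw [hAval]
    have hc0 : (0:ℝ) ≤ 2*M*(E 0 + 1) := by nlinarith [hE0, hM0]
    have t1 : E 0 * Real.exp ((-(2*M+1))*x) ≤ E 0 :=
      le_trans (mul_le_mul_of_nonneg_left hexple hE0) (by linarith)
    have t2 : -(2*M*(E 0 + 1)) * (Real.exp ((-(2*M+1))*x) - 1) ≤ 2*M*(E 0 + 1) := by
      nlinarith [mul_nonneg hc0 hexppos.le]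
    linarith [hGx, t1, t2]
  -- continuous induction
  set S : Set ℝ := {c | c ∈ Icc 0 (π/2) ∧ ∀ x ∈ Icc 0 c, ψ x ≤ A} with hS
  have h0S : (0:ℝ) ∈ S := by
    refine ⟨⟨le_rfl, hπ.le⟩, fun x hx => ?_⟩
    have hx0 : x = 0 := le_antisymm hx.2 hx.1
    rw [hx0]; exact hAE0
  have hbddS : BddAbove S := ⟨π/2, fun c hc => hc.1.2⟩
  set c₀ := sSup S with hc₀def
  have hc₀0 : 0 ≤ c₀ := le_csSup hbddS h0S
  have hc₀π : c₀ ≤ π/2 := csSup_le ⟨0, h0S⟩ (fun c hc => hc.1.2)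
  have hlt : ∀ x, 0 ≤ x → x < c₀ → ψ x ≤ A := by
    intro x hx0 hxc
    obtain ⟨c, hcS, hxc'⟩ := exists_lt_of_lt_csSup ⟨0, h0S⟩ hxc
    exact hcS.2 x ⟨hx0, hxc'.le⟩
  have hc₀S : c₀ ∈ S := by
    refine ⟨⟨hc₀0, hc₀π⟩, fun x hx => ?_⟩
    rcases lt_or_eq_of_le hx.2 with h | h
    · exact hlt x hx.1 h
    · rcases eq_or_lt_of_le hc₀0 with h0 | h0
      · rw [h, ← h0]; exact hAE0
      · rw [h]
        have hcw : Filter.Tendsto ψ (nhdsWithin c₀ (Icc 0 (π/2))) (nhds (ψ c₀)) :=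
          hψcont c₀ ⟨hc₀0, hc₀π⟩
        have hmono : Filter.Tendsto ψ (nhdsWithin c₀ (Ico 0 c₀)) (nhds (ψ c₀)) :=
          hcw.mono_left (nhdsWithin_mono _ (fun y hy => ⟨hy.1, (hy.2.le).trans hc₀π⟩))
        have hne : (nhdsWithin c₀ (Ico 0 c₀)).NeBot := by
          rw [← mem_closure_iff_nhdsWithin_neBot, closure_Ico (ne_of_lt h0)]
          exact ⟨hc₀0, le_rfl⟩
        exact le_of_tendsto hmono
          (Filter.eventually_of_mem self_mem_nhdsWithin (fun y hy => hlt y hy.1 hy.2))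
  have hc₀eq : c₀ = π/2 := by
    by_contra hne
    have hc₀lt : c₀ < π/2 := lt_of_le_of_ne hc₀π hne
    have hψc₀ : ψ c₀ ≤ A - 1 := hkey c₀ ⟨hc₀0, hc₀π⟩ hc₀S.2 c₀ ⟨hc₀0, le_rfl⟩
    have hcw : Filter.Tendsto ψ (nhdsWithin c₀ (Icc 0 (π/2))) (nhds (ψ c₀)) :=
      hψcont c₀ ⟨hc₀0, hc₀π⟩
    have hev : ∀ᶠ y in nhdsWithin c₀ (Icc 0 (π/2)), ψ y < A :=
      hcw (Iio_mem_nhds (by linarith))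
    rw [Filter.eventually_iff, Metric.mem_nhdsWithin_iff] at hev
    obtain ⟨ε, hε, hball⟩ := hev
    set c₁ := min (π/2) (c₀ + ε/2) with hc₁def
    have hc₁S : c₁ ∈ S := by
      have hc₁0 : 0 ≤ c₁ := le_min hπ.le (by linarith)
      have hc₁π : c₁ ≤ π/2 := min_le_left _ _
      refine ⟨⟨hc₁0, hc₁π⟩, fun x hx => ?_⟩
      rcases le_or_gt x c₀ with h | h
      · exact hc₀S.2 x ⟨hx.1, h⟩
      · have hx1 : x ≤ c₀ + ε/2 := hx.2.trans (min_le_right _ _)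
        have hxmem : x ∈ Metric.ball c₀ ε ∩ Icc 0 (π/2) := by
          constructor
          · rw [Metric.mem_ball, Real.dist_eq, abs_of_pos (by linarith)]
            linarith
          · exact ⟨hx.1, hx.2.trans hc₁π⟩
        exact (hball hxmem).le
    have h1 : c₁ ≤ c₀ := le_csSup hbddS hc₁S
    have h2 : c₀ < c₁ := lt_min hc₀lt (by linarith)
    linarith
  -- final bound extraction
  intro x hx
  have hψx : ψ x ≤ A := hc₀S.2 x (by rw [hc₀eq]; exact hx)
  have hEx : E x ≤ A * Real.exp (L*x) := hconv x hψx
  set m := ‖μ‖ with hm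
  have hm1 : (1:ℝ) ≤ m := hμ
  have hm0 : (0:ℝ) < m := lt_of_lt_of_le one_pos hm1
  have hE0le : E 0 ≤ c₂ * m^4 := by
    simp only [hE]
    rw [hinit μ, hinit' μ]
    have n1 : ‖μ * ((μ:ℂ) * (a₂':ℂ) + (a₂:ℂ))‖ ≤ m^2 * (|a₂'| + |a₂|) := by
      rw [norm_mul]
      calc m * ‖(μ:ℂ) * (a₂':ℂ) + (a₂:ℂ)‖
          ≤ m * (m * |a₂'| + |a₂|) := by
            apply mul_le_mul_of_nonneg_left _ hm0.le
            refine (norm_add_le _ _).trans ?_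
            rw [norm_mul, Complex.norm_real, Complex.norm_real, Real.norm_eq_abs, Real.norm_eq_abs]
        _ ≤ m^2 * (|a₂'| + |a₂|) := by nlinarith [mul_nonneg (mul_nonneg hm0.le (abs_nonneg a₂)) (by linarith : (0:ℝ) ≤ m - 1)]
    have n2 : ‖(μ:ℂ) * (a₁':ℂ) + (a₁:ℂ)‖ ≤ m * (|a₁'| + |a₁|) := by
      refine (norm_add_le _ _).trans ?_
      rw [norm_mul, Complex.norm_real, Complex.norm_real, Real.norm_eq_abs, Real.norm_eq_abs]
      nlinarith [abs_nonneg a₁]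
    rw [← Complex.sq_norm, ← Complex.sq_norm, hc₂def]
    have n1' : ‖μ * ((μ:ℂ) * (a₂':ℂ) + (a₂:ℂ))‖^2 ≤ m^4 * (|a₂'| + |a₂|)^2 := by
      nlinarith [norm_nonneg (μ * ((μ:ℂ) * (a₂':ℂ) + (a₂:ℂ))), sq_nonneg m,
        abs_nonneg a₂', abs_nonneg a₂]
    have n2' : ‖(μ:ℂ) * (a₁':ℂ) + (a₁:ℂ)‖^2 ≤ m^4 * (|a₁'| + |a₁|)^2 := by
      have : ‖(μ:ℂ) * (a₁':ℂ) + (a₁:ℂ)‖^2 ≤ m^2 * (|a₁'| + |a₁|)^2 := by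
        nlinarith [norm_nonneg ((μ:ℂ) * (a₁':ℂ) + (a₁:ℂ)), abs_nonneg a₁', abs_nonneg a₁]
      refine this.trans ?_
      nlinarith [sq_nonneg (|a₁'| + |a₁|), hm1, hm0, sq_nonneg (m^2 - 1), sq_nonneg (m - 1),
        mul_nonneg (mul_nonneg hm0.le hm0.le) (sq_nonneg (|a₁'| + |a₁|))]
    nlinarith [n1', n2']
  have hm4 : (1:ℝ) ≤ m^4 := by nlinarith [hm1, sq_nonneg m, sq_nonneg (m-1), sq_nonneg (m^2-1)]
  have hA4 : A ≤ (c₂+1)*(2*M+1)*m^4 := by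
    rw [hA]
    nlinarith [hE0le, hm4, hM0, hc₂0]
  have h2 : (‖μ * ω₁ μ x‖)^2 ≤ A * Real.exp (L*x) := by
    rw [Complex.sq_norm]
    exact le_trans (le_add_of_nonneg_right (Complex.normSq_nonneg _)) hEx
  have e1 : Real.exp (L*x) = (Real.exp (|μ.im| * x))^2 * Real.exp ((2*M+1)*x) := by
    rw [pow_two, ← Real.exp_add, ← Real.exp_add]
    congr 1
    rw [hLdef]; ring
  have e2 : Real.exp ((2*M+1)*x) ≤ (Real.exp ((M+1/2)*(π/2)))^2 := by
    rw [pow_two, ← Real.exp_add]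
    apply Real.exp_le_exp.2
    nlinarith [hx.2, hM0]
  have hRHS : A * Real.exp (L*x) ≤ ((c₂+1)*(2*M+1)) * m^4 * (Real.exp ((M+1/2)*(π/2)))^2
      * (Real.exp (|μ.im| * x))^2 := by
    rw [e1]
    calc A * ((Real.exp (|μ.im| * x))^2 * Real.exp ((2*M+1)*x))
        ≤ ((c₂+1)*(2*M+1)*m^4) * ((Real.exp (|μ.im| * x))^2 * (Real.exp ((M+1/2)*(π/2)))^2) := by
          apply mul_le_mul hA4
          · exact mul_le_mul_of_nonneg_left e2 (by positivity)
          · positivity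
          · positivity
      _ = ((c₂+1)*(2*M+1)) * m^4 * (Real.exp ((M+1/2)*(π/2)))^2 * (Real.exp (|μ.im| * x))^2 := by
          ring
  have hfin : ‖μ * ω₁ μ x‖
      ≤ Real.sqrt ((c₂+1)*(2*M+1)) * m^2 * Real.exp ((M+1/2)*(π/2)) * Real.exp (|μ.im| * x) := by
    have hsq : ((c₂+1)*(2*M+1)) * m^4 * (Real.exp ((M+1/2)*(π/2)))^2 * (Real.exp (|μ.im| * x))^2
        = (Real.sqrt ((c₂+1)*(2*M+1)) * m^2 * Real.exp ((M+1/2)*(π/2)) * Real.exp (|μ.im| * x))^2 := by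
      rw [mul_pow, mul_pow, mul_pow, Real.sq_sqrt (by positivity)]
      ring
    calc ‖μ * ω₁ μ x‖ = Real.sqrt ((‖μ * ω₁ μ x‖)^2) :=
          (Real.sqrt_sq (norm_nonneg _)).symm
      _ ≤ Real.sqrt ((Real.sqrt ((c₂+1)*(2*M+1)) * m^2 * Real.exp ((M+1/2)*(π/2))
            * Real.exp (|μ.im| * x))^2) := by
          apply Real.sqrt_le_sqrt
          rw [← hsq]
          exact h2.trans hRHS
      _ = _ := Real.sqrt_sq (by positivity)
  have habs : ‖μ * ω₁ μ x‖ = m * ‖ω₁ μ x‖ := by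
    rw [norm_mul]
  apply le_of_mul_le_mul_left _ hm0
  calc m * ‖ω₁ μ x‖ = ‖μ * ω₁ μ x‖ := habs.symm
    _ ≤ Real.sqrt ((c₂+1)*(2*M+1)) * m^2 * Real.exp ((M+1/2)*(π/2)) * Real.exp (|μ.im| * x) := hfin
    _ = m * (Real.sqrt ((c₂+1)*(2*M+1)) * Real.exp ((M+1/2)*(π/2)) * m * Real.exp (|μ.im| * x)) := by
        ring
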